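/- arXiv:2206.05598 — 4 statements merged into one kernel-verified Lean document; each statement's English description precedes it below -/
import Mathlib

section
/- Let A = ∏_{j=1}^n [a_j, b_j] be a box in ℝⁿ (with a_j ≤ b_j, possibly infinite endpoints), Λ₀, Λ₁ diagonal n×n matrices with nonnegative entries, x₀, x₁ ∈ ℝᵐ, S an n×m matrix, α ∈ (0,1), and suppose αΛ₁ + (1-α)Λ₀ is invertible. Define A_i := {Λᵢ y − S xᵢ : y ∈ A}, Λ_α := αΛ₁ + (1-α)Λ₀, x_α := αx₁ + (1-α)x₀. Then α·A₁ + (1-α)·A₀ ⊆ {Λ_α y − S x_α : y ∈ A}. -/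
open Pointwise

/-- Diagonal-scale case of the Minkowski-sum inclusion, for boxes
(with possibly infinite endpoints). -/
theorem stmt_6 {n m : ℕ} (a b : Fin n → EReal) (hab : ∀ j, a j ≤ b j)
    (A : Set (Fin n → ℝ))
    (hA : A = {y : Fin n → ℝ | ∀ j, a j ≤ (y j : EReal) ∧ (y j : EReal) ≤ b j})
    (Λ₀ Λ₁ : Matrix (Fin n) (Fin n) ℝ)
    (hΛ₀ : Λ₀.IsDiag) (hΛ₁ : Λ₁.IsDiag)
    (hΛ₀' : ∀ j, 0 ≤ Λ₀ j j) (hΛ₁' : ∀ j, 0 ≤ Λ₁ j j)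
    (x₀ x₁ : Fin m → ℝ) (S : Matrix (Fin n) (Fin m) ℝ)
    (α : ℝ) (hα : α ∈ Set.Ioo (0:ℝ) 1)
    (hinv : IsUnit (α • Λ₁ + (1 - α) • Λ₀).det) :
    α • {w : Fin n → ℝ | ∃ y ∈ A, w = Λ₁.mulVec y - S.mulVec x₁} +
      (1 - α) • {w : Fin n → ℝ | ∃ y ∈ A, w = Λ₀.mulVec y - S.mulVec x₀} ⊆
    {w : Fin n → ℝ | ∃ y ∈ A,
        w = (α • Λ₁ + (1 - α) • Λ₀).mulVec y - S.mulVec (α • x₁ + (1 - α) • x₀)} := by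
  obtain ⟨hα0, hα1⟩ := hα
  have h1α : (0:ℝ) < 1 - α := by linarith
  set Λα := α • Λ₁ + (1 - α) • Λ₀ with hΛα
  have hΛαd : Λα.IsDiag := by
    intro i j hij
    simp [hΛα, hΛ₁ hij, hΛ₀ hij]
  -- diagonal entries of Λα are positive
  have hdet : Λα.det = ∏ i, Λα i i := by
    conv_lhs => rw [← hΛαd.diagonal_diag]
    rw [Matrix.det_diagonal]
    rfl
  have hpos : ∀ j, 0 < Λα j j := by
    intro j
    have hne : Λα j j ≠ 0 := by
      intro h0
      have : Λα.det = 0 := by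
        rw [hdet]
        exact Finset.prod_eq_zero (Finset.mem_univ j) h0
      rw [this] at hinv
      simpa using hinv
    have hnn : 0 ≤ Λα j j := by
      have := hΛ₀' j; have := hΛ₁' j
      simp only [hΛα, Matrix.add_apply, Matrix.smul_apply, smul_eq_mul]
      nlinarith
    exact lt_of_le_of_ne hnn (Ne.symm hne)
  -- diagonal matrix acts coordinatewise
  have diagmv : ∀ (M : Matrix (Fin n) (Fin n) ℝ), M.IsDiag →
      ∀ (y : Fin n → ℝ) (i : Fin n), M.mulVec y i = M i i * y i := by
    intro M hM y i
    simp only [Matrix.mulVec, dotProduct]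
    rw [Finset.sum_eq_single i]
    · intro j _ hj; rw [hM (Ne.symm hj), zero_mul]
    · intro h; exact absurd (Finset.mem_univ i) h
  rintro w hw
  rw [Set.mem_add] at hw
  obtain ⟨u, hu, v, hv, huv⟩ := hw
  obtain ⟨u', ⟨y₁, hy₁, rfl⟩, rfl⟩ := hu
  obtain ⟨v', ⟨y₀, hy₀, rfl⟩, rfl⟩ := hv
  rw [hA] at hy₁ hy₀ ⊢
  -- define the convex-combination point y
  set y : Fin n → ℝ := fun j =>
    (α * Λ₁ j j * y₁ j + (1 - α) * Λ₀ j j * y₀ j) / Λα j j with hy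
  have hΛαjj : ∀ j, Λα j j = α * Λ₁ j j + (1 - α) * Λ₀ j j := by
    intro j; simp [hΛα, smul_eq_mul]
  have hybetween : ∀ j, min (y₀ j) (y₁ j) ≤ y j ∧ y j ≤ max (y₀ j) (y₁ j) := by
    intro j
    have hd := hpos j
    have h1 : 0 ≤ α * Λ₁ j j := mul_nonneg hα0.le (hΛ₁' j)
    have h0 : 0 ≤ (1 - α) * Λ₀ j j := mul_nonneg h1α.le (hΛ₀' j)
    have hsum := hΛαjj j
    constructor
    · rw [hy, le_div_iff₀ hd]
      rcases min_cases (y₀ j) (y₁ j) with ⟨hmin, hle⟩ | ⟨hmin, hle⟩ <;> rw [hmin, hsum]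
      · nlinarith [mul_nonneg h1 (sub_nonneg.mpr hle)]
      · nlinarith [mul_nonneg h0 (sub_nonneg.mpr hle.le)]
    · rw [hy, div_le_iff₀ hd]
      rcases max_cases (y₀ j) (y₁ j) with ⟨hmax, hle⟩ | ⟨hmax, hle⟩ <;> rw [hmax, hsum]
      · nlinarith [mul_nonneg h1 (sub_nonneg.mpr hle)]
      · nlinarith [mul_nonneg h0 (sub_nonneg.mpr hle.le)]
  refine ⟨y, ?_, ?_⟩
  · intro j
    obtain ⟨hlo, hhi⟩ := hybetween j
    obtain ⟨ha₁, hb₁⟩ := hy₁ j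
    obtain ⟨ha₀, hb₀⟩ := hy₀ j
    constructor
    · calc a j ≤ (min (y₀ j) (y₁ j) : ℝ) := by
            rcases min_cases (y₀ j) (y₁ j) with ⟨h, _⟩ | ⟨h, _⟩ <;> rw [h] <;> assumption
        _ ≤ (y j : EReal) := EReal.coe_le_coe_iff.mpr hlo
    · calc (y j : EReal) ≤ (max (y₀ j) (y₁ j) : ℝ) := EReal.coe_le_coe_iff.mpr hhi
        _ ≤ b j := by
            rcases max_cases (y₀ j) (y₁ j) with ⟨h, _⟩ | ⟨h, _⟩ <;> rw [h] <;> assumption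
  · subst huv
    funext i
    have hd : Λα i i ≠ 0 := (hpos i).ne'
    have hmv := diagmv Λα hΛαd y i
    have hmv₁ := diagmv Λ₁ hΛ₁ y₁ i
    have hmv₀ := diagmv Λ₀ hΛ₀ y₀ i
    have hS : S.mulVec (α • x₁ + (1 - α) • x₀) i
        = α * S.mulVec x₁ i + (1 - α) * S.mulVec x₀ i := by
      rw [Matrix.mulVec_add, Matrix.mulVec_smul, Matrix.mulVec_smul]
      simp [smul_eq_mul]
    have key : Λα i i * y i = α * Λ₁ i i * y₁ i + (1 - α) * Λ₀ i i * y₀ i := by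
      show Λα i i * ((α * Λ₁ i i * y₁ i + (1 - α) * Λ₀ i i * y₀ i) / Λα i i) = _
      field_simp
    simp only [Pi.add_apply, Pi.smul_apply, Pi.sub_apply, smul_eq_mul, hmv, key, hS,
      hmv₁, hmv₀]
    ring
end

section
/- (Positive semidefinite matrices that sum to the identity generate balls, hard inclusion.) Let y₀, y₁ ∈ ℝⁿ and let y be any point in the closed Euclidean ball centered at (y₀+y₁)/2 with radius ‖y₁ − y₀‖₂/2. Then there exists a real symmetric positive-semidefinite matrix C with spectral radius ≤ 1 such that y = C y₀ + (I − C) y₁. -/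
open Matrix

private lemma vmv_mulVec {n : ℕ} (u x : Fin n → ℝ) :
    (Matrix.vecMulVec u u) *ᵥ x = (u ⬝ᵥ x) • u := by
  ext j
  simp [Matrix.mulVec, Matrix.vecMulVec, dotProduct, Finset.mul_sum, mul_comm,
    mul_assoc, mul_left_comm]

private lemma inner_eq_dot {n : ℕ} (a b : EuclideanSpace ℝ (Fin n)) :
    (inner ℝ a b : ℝ) = (WithLp.equiv 2 (Fin n → ℝ) a) ⬝ᵥ (WithLp.equiv 2 (Fin n → ℝ) b) := by
  simp [PiLp.inner_apply, dotProduct, mul_comm]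

/-- Every point of the ball centered at `(y₀+y₁)/2` with radius `‖y₁-y₀‖/2` is of
the form `C y₀ + (I - C) y₁` for some symmetric PSD `C` with spectral radius ≤ 1. -/
theorem stmt_9 {n : ℕ} (y₀ y₁ y : EuclideanSpace ℝ (Fin n))
    (hy : ‖y - (2:ℝ)⁻¹ • (y₀ + y₁)‖ ≤ ‖y₁ - y₀‖ / 2) :
    ∃ C : Matrix (Fin n) (Fin n) ℝ, C.PosSemidef ∧ (1 - C).PosSemidef ∧
      (WithLp.equiv 2 (Fin n → ℝ)) y =
        C.mulVec ((WithLp.equiv 2 (Fin n → ℝ)) y₀) +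
          (1 - C).mulVec ((WithLp.equiv 2 (Fin n → ℝ)) y₁) := by
  set z : EuclideanSpace ℝ (Fin n) := y - y₁ with hz
  set z₀ : EuclideanSpace ℝ (Fin n) := y₀ - y₁ with hz₀
  -- key inequality ‖z‖² ≤ ⟪z, z₀⟫
  have hrw : y - (2:ℝ)⁻¹ • (y₀ + y₁) = z - (2:ℝ)⁻¹ • z₀ := by
    rw [hz, hz₀]; module
  have hn : ‖y₁ - y₀‖ = ‖z₀‖ := by rw [hz₀, norm_sub_rev]
  have hy' : ‖z - (2:ℝ)⁻¹ • z₀‖ ≤ ‖z₀‖ / 2 := by rwa [hrw, hn] at hy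
  have hsq : ‖z - (2:ℝ)⁻¹ • z₀‖ ^ 2 ≤ (‖z₀‖ / 2) ^ 2 :=
    pow_le_pow_left₀ (norm_nonneg _) hy' 2
  have hkey : ‖z‖ ^ 2 ≤ inner ℝ z z₀ := by
    have := hsq
    rw [@norm_sub_sq_real] at this
    simp only [inner_smul_right, norm_smul, norm_inv, Real.norm_ofNat, mul_pow] at this
    nlinarith [norm_nonneg z₀]
  by_cases h0 : z = 0
  · refine ⟨0, Matrix.PosSemidef.zero, by simpa using Matrix.PosSemidef.one, ?_⟩
    have : y = y₁ := by rwa [hz, sub_eq_zero] at h0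
    simp [this]
  · set u : Fin n → ℝ := WithLp.equiv 2 (Fin n → ℝ) z with hu
    set w : Fin n → ℝ := WithLp.equiv 2 (Fin n → ℝ) z₀ with hw
    set t : ℝ := inner ℝ z z₀ with ht
    have hzpos : 0 < ‖z‖ ^ 2 := pow_pos (norm_pos_iff.mpr h0) 2
    have htpos : 0 < t := lt_of_lt_of_le hzpos hkey
    have hherm : (t⁻¹ • Matrix.vecMulVec u u).IsHermitian := by
      ext i j
      simp [Matrix.conjTranspose_apply, Matrix.vecMulVec_apply, mul_comm]
    refine ⟨t⁻¹ • Matrix.vecMulVec u u, ?_, ?_, ?_⟩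
    · refine Matrix.posSemidef_iff_dotProduct_mulVec.mpr ⟨?_, ?_⟩
      · exact hherm
      · intro x
        rw [Matrix.smul_mulVec, dotProduct_smul, vmv_mulVec, dotProduct_smul]
        have : star x ⬝ᵥ u = u ⬝ᵥ x := by
          simp [dotProduct, mul_comm]
        rw [smul_eq_mul, smul_eq_mul, this]
        exact mul_nonneg (inv_nonneg.mpr htpos.le) (mul_self_nonneg _)
    · refine Matrix.posSemidef_iff_dotProduct_mulVec.mpr ⟨?_, ?_⟩
      · exact Matrix.isHermitian_one.sub hherm
      · intro x
        rw [Matrix.sub_mulVec, dotProduct_sub, Matrix.one_mulVec]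
        rw [Matrix.smul_mulVec, dotProduct_smul, vmv_mulVec, dotProduct_smul]
        have hst : star x ⬝ᵥ u = u ⬝ᵥ x := by simp [dotProduct, mul_comm]
        rw [smul_eq_mul, smul_eq_mul, hst]
        set xE : EuclideanSpace ℝ (Fin n) := (WithLp.equiv 2 (Fin n → ℝ)).symm x with hxE
        have hux : u ⬝ᵥ x = inner ℝ z xE := by
          rw [inner_eq_dot]; simp [hxE, hu]
        have hxx : star x ⬝ᵥ x = ‖xE‖ ^ 2 := by
          rw [← real_inner_self_eq_norm_sq, inner_eq_dot]
          simp [hxE, dotProduct]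
        have hcs : (inner ℝ z xE : ℝ) * inner ℝ z xE ≤ (inner ℝ z z : ℝ) * inner ℝ xE xE :=
          real_inner_mul_inner_self_le z xE
        rw [hux, hxx]
        rw [real_inner_self_eq_norm_sq, real_inner_self_eq_norm_sq] at hcs
        have h1 : t⁻¹ * ((inner ℝ z xE : ℝ) * inner ℝ z xE) ≤ t⁻¹ * (‖z‖^2 * ‖xE‖^2) := by
          apply mul_le_mul_of_nonneg_left hcs (le_of_lt (inv_pos.mpr htpos))
        have h2 : t⁻¹ * (‖z‖^2 * ‖xE‖^2) ≤ ‖xE‖^2 := by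
          rw [← mul_assoc]
          have : t⁻¹ * ‖z‖^2 ≤ 1 := by
            rw [inv_mul_le_iff₀ htpos]; simpa using hkey
          nlinarith [sq_nonneg ‖xE‖]
        linarith
    · -- the equation
      have huw : u ⬝ᵥ w = t := by rw [ht, inner_eq_dot]
      rw [Matrix.sub_mulVec, Matrix.one_mulVec, Matrix.smul_mulVec, Matrix.smul_mulVec,
        vmv_mulVec, vmv_mulVec]
      have hwdiff : WithLp.equiv 2 (Fin n → ℝ) y₀ - WithLp.equiv 2 (Fin n → ℝ) y₁ = w := by
        rw [hw, hz₀]; rfl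
      have hydiff : WithLp.equiv 2 (Fin n → ℝ) y - WithLp.equiv 2 (Fin n → ℝ) y₁ = u := by
        rw [hu, hz]; rfl
      have hd0 : u ⬝ᵥ (WithLp.equiv 2 (Fin n → ℝ)) y₀ - u ⬝ᵥ (WithLp.equiv 2 (Fin n → ℝ)) y₁ = t := by
        rw [← dotProduct_sub, hwdiff, huw]
      have hEy : (WithLp.equiv 2 (Fin n → ℝ)) y = (WithLp.equiv 2 (Fin n → ℝ)) y₁ + u := by
        rw [← hydiff]; abel
      rw [hEy]
      set A : Fin n → ℝ := t⁻¹ • ((u ⬝ᵥ (WithLp.equiv 2 (Fin n → ℝ)) y₀) • u) with hA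
      set B : Fin n → ℝ := t⁻¹ • ((u ⬝ᵥ (WithLp.equiv 2 (Fin n → ℝ)) y₁) • u) with hB
      have hAB : A - B = u := by
        rw [hA, hB, smul_smul, smul_smul, ← sub_smul, ← mul_sub, hd0,
          inv_mul_cancel₀ (ne_of_gt htpos), one_smul]
      have hre : A + ((WithLp.equiv 2 (Fin n → ℝ)) y₁ - B)
          = (WithLp.equiv 2 (Fin n → ℝ)) y₁ + (A - B) := by abel
      rw [hre, hAB]
end

section
/- (Main theorem, scalar scale.) Under the same setup (logconcave probability measure μ on ℝⁿ satisfying the Prékopa inequality, convex measurable quantization region Q⁻¹(z), S ∈ ℝ^{n×m}), the function (x, ψ) ↦ μ({w : (Sx + w)/ψ ∈ Q⁻¹(z)}) is jointly logconcave on ℝᵐ × (0, ∞). -/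
open Pointwise MeasureTheory

/-- Main theorem, scalar scale: the quantized-data likelihood is jointly
logconcave in the location `x` and the scalar scale `ψ > 0`. -/
theorem stmt_13 {n m : ℕ} {Z : Type*} [Countable Z]
    (f : (Fin n → ℝ) → ENNReal)
    (hf : ∀ w₀ w₁ : Fin n → ℝ, ∀ α : ℝ, α ∈ Set.Icc (0:ℝ) 1 →
      f (α • w₁ + (1 - α) • w₀) ≥ f w₁ ^ α * f w₀ ^ (1 - α))
    (μ : Measure (Fin n → ℝ)) [IsProbabilityMeasure μ]
    (hμ : μ = MeasureTheory.volume.withDensity f)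
    (hPrekopa : ∀ A₀ A₁ : Set (Fin n → ℝ), Convex ℝ A₀ → Convex ℝ A₁ →
      ∀ α : ℝ, α ∈ Set.Icc (0:ℝ) 1 →
        μ (α • A₁ + (1 - α) • A₀) ≥ μ A₁ ^ α * μ A₀ ^ (1 - α))
    (Q : (Fin n → ℝ) → Z) (z : Z)
    (hQconv : Convex ℝ (Q ⁻¹' {z})) (hQmeas : MeasurableSet (Q ⁻¹' {z}))
    (S : Matrix (Fin n) (Fin m) ℝ) :
    ∀ x₀ x₁ : Fin m → ℝ, ∀ ψ₀ ψ₁ : ℝ, 0 < ψ₀ → 0 < ψ₁ →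
      ∀ α : ℝ, α ∈ Set.Icc (0:ℝ) 1 →
      μ {w | (α * ψ₁ + (1 - α) * ψ₀)⁻¹ •
            (S.mulVec (α • x₁ + (1 - α) • x₀) + w) ∈ Q ⁻¹' {z}} ≥
        μ {w | ψ₁⁻¹ • (S.mulVec x₁ + w) ∈ Q ⁻¹' {z}} ^ α *
          μ {w | ψ₀⁻¹ • (S.mulVec x₀ + w) ∈ Q ⁻¹' {z}} ^ (1 - α) := by
  intro x₀ x₁ ψ₀ ψ₁ hψ₀ hψ₁ α hα
  obtain ⟨hα0, hα1⟩ := hα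
  have hα1' : (0:ℝ) ≤ 1 - α := by linarith
  set C := Q ⁻¹' {z} with hC
  set ψ : ℝ := α * ψ₁ + (1 - α) * ψ₀ with hψdef
  have hψ : 0 < ψ := by
    rcases eq_or_lt_of_le hα0 with h | h
    · simp [hψdef, ← h]; nlinarith
    · nlinarith
  -- the two sets are convex
  have hW : ∀ (x : Fin m → ℝ) (ψ' : ℝ),
      Convex ℝ {w | ψ'⁻¹ • (S.mulVec x + w) ∈ C} := by
    intro x ψ' a ha b hb s t hs ht hst
    simp only [Set.mem_setOf_eq] at ha hb ⊢
    have key := hQconv ha hb hs ht hst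
    have heq : ψ'⁻¹ • (S.mulVec x + (s • a + t • b)) =
        s • ψ'⁻¹ • (S.mulVec x + a) + t • ψ'⁻¹ • (S.mulVec x + b) := by
      have h1 : S.mulVec x = s • S.mulVec x + t • S.mulVec x := by
        rw [← add_smul, hst, one_smul]
      conv_lhs => rw [h1]
      module
    rw [heq]; exact key
  set W₀ : Set (Fin n → ℝ) := {w | ψ₀⁻¹ • (S.mulVec x₀ + w) ∈ C} with hW₀
  set W₁ : Set (Fin n → ℝ) := {w | ψ₁⁻¹ • (S.mulVec x₁ + w) ∈ C} with hW₁
  have hsub : α • W₁ + (1 - α) • W₀ ⊆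
      {w | ψ⁻¹ • (S.mulVec (α • x₁ + (1 - α) • x₀) + w) ∈ C} := by
    rintro w hw
    obtain ⟨u, hu, v, hv, rfl⟩ := Set.mem_add.1 hw
    obtain ⟨a, ha, rfl⟩ := hu
    obtain ⟨b, hb, rfl⟩ := hv
    simp only [Set.mem_setOf_eq, hW₀, hW₁] at ha hb ⊢
    have hp : (0:ℝ) ≤ α * ψ₁ / ψ := by positivity
    have hq : (0:ℝ) ≤ (1 - α) * ψ₀ / ψ := by positivity
    have hpq : α * ψ₁ / ψ + (1 - α) * ψ₀ / ψ = 1 := by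
      field_simp
      exact hψdef.symm
    have key := hQconv ha hb hp hq hpq
    have heq : ψ⁻¹ • (S.mulVec (α • x₁ + (1 - α) • x₀) + (α • a + (1 - α) • b)) =
        (α * ψ₁ / ψ) • ψ₁⁻¹ • (S.mulVec x₁ + a) +
        ((1 - α) * ψ₀ / ψ) • ψ₀⁻¹ • (S.mulVec x₀ + b) := by
      funext i
      simp only [Matrix.mulVec_add, Matrix.mulVec_smul, Pi.smul_apply, Pi.add_apply,
        smul_eq_mul]
      field_simp
      ring
    rw [heq]; exact key
  calc μ {w | ψ⁻¹ • (S.mulVec (α • x₁ + (1 - α) • x₀) + w) ∈ C}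
      ≥ μ (α • W₁ + (1 - α) • W₀) := measure_mono hsub
    _ ≥ μ W₁ ^ α * μ W₀ ^ (1 - α) := hPrekopa W₀ W₁ (hW x₀ ψ₀) (hW x₁ ψ₁) α ⟨hα0, hα1⟩
end

section
/- (Main theorem, diagonal scale with box quantizer.) Let μ be a logconcave probability measure on ℝⁿ satisfying the Prékopa inequality, let Q⁻¹(z) = ∏_{j=1}^n [a_j, b_j] be a box, and S ∈ ℝ^{n×m}. Then (x, Λ) ↦ μ({Λy − Sx : y ∈ Q⁻¹(z)}) is jointly logconcave in x ∈ ℝᵐ and in the diagonal positive-definite matrix Λ (identified with its vector of diagonal entries in (0,∞)ⁿ). -/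
open Pointwise MeasureTheory

private lemma combo_mem_Icc_EReal {a b : EReal} {u v lam : ℝ}
    (hl0 : 0 ≤ lam) (hl1 : lam ≤ 1)
    (hu : a ≤ (u : EReal) ∧ (u : EReal) ≤ b)
    (hv : a ≤ (v : EReal) ∧ (v : EReal) ≤ b) :
    a ≤ ((lam * u + (1 - lam) * v : ℝ) : EReal) ∧
      ((lam * u + (1 - lam) * v : ℝ) : EReal) ≤ b := by
  constructor
  · have h1 : min u v ≤ lam * u + (1 - lam) * v := by
      nlinarith [min_le_left u v, min_le_right u v]
    have h2 : a ≤ ((min u v : ℝ) : EReal) := by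
      rcases min_cases u v with ⟨h, _⟩ | ⟨h, _⟩ <;> rw [h]
      · exact hu.1
      · exact hv.1
    exact h2.trans (EReal.coe_le_coe_iff.mpr h1)
  · have h1 : lam * u + (1 - lam) * v ≤ max u v := by
      nlinarith [le_max_left u v, le_max_right u v]
    have h2 : ((max u v : ℝ) : EReal) ≤ b := by
      rcases max_cases u v with ⟨h, _⟩ | ⟨h, _⟩ <;> rw [h]
      · exact hu.2
      · exact hv.2
    exact (EReal.coe_le_coe_iff.mpr h1).trans h2

private lemma convexA {n m : ℕ} {a b : Fin n → EReal} {B : Set (Fin n → ℝ)}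
    (hB : B = {y : Fin n → ℝ | ∀ j, a j ≤ (y j : EReal) ∧ (y j : EReal) ≤ b j})
    (S : Matrix (Fin n) (Fin m) ℝ) (x : Fin m → ℝ) (d : Fin n → ℝ) :
    Convex ℝ {w | ∃ y ∈ B, w = (fun j => d j * y j) - S.mulVec x} := by
  rintro w₁ ⟨y₁, hy₁, rfl⟩ w₀ ⟨y₀, hy₀, rfl⟩ p q hp hq hpq
  have hq' : q = 1 - p := by linarith
  refine ⟨p • y₁ + q • y₀, ?_, ?_⟩
  · subst hB
    intro j
    have h := combo_mem_Icc_EReal (a := a j) (b := b j) hp (by linarith)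
      (hy₁ j) (hy₀ j)
    simpa [hq', Pi.add_apply, Pi.smul_apply, smul_eq_mul] using h
  · funext j
    simp only [Pi.add_apply, Pi.smul_apply, Pi.sub_apply, smul_eq_mul]
    rw [hq']; ring

/-- Main theorem, diagonal scale with box quantizer: the likelihood is jointly
logconcave in the location `x` and the diagonal entries `d ∈ (0,∞)ⁿ` of `Λ`. -/
theorem stmt_14 {n m : ℕ}
    (f : (Fin n → ℝ) → ENNReal)
    (hf : ∀ w₀ w₁ : Fin n → ℝ, ∀ α : ℝ, α ∈ Set.Icc (0:ℝ) 1 →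
      f (α • w₁ + (1 - α) • w₀) ≥ f w₁ ^ α * f w₀ ^ (1 - α))
    (μ : Measure (Fin n → ℝ)) [IsProbabilityMeasure μ]
    (hμ : μ = MeasureTheory.volume.withDensity f)
    (hPrekopa : ∀ A₀ A₁ : Set (Fin n → ℝ), Convex ℝ A₀ → Convex ℝ A₁ →
      ∀ α : ℝ, α ∈ Set.Icc (0:ℝ) 1 →
        μ (α • A₁ + (1 - α) • A₀) ≥ μ A₁ ^ α * μ A₀ ^ (1 - α))
    (a b : Fin n → EReal) (hab : ∀ j, a j ≤ b j)
    (B : Set (Fin n → ℝ))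
    (hB : B = {y : Fin n → ℝ | ∀ j, a j ≤ (y j : EReal) ∧ (y j : EReal) ≤ b j})
    (S : Matrix (Fin n) (Fin m) ℝ) :
    ∀ x₀ x₁ : Fin m → ℝ, ∀ d₀ d₁ : Fin n → ℝ,
      (∀ j, 0 < d₀ j) → (∀ j, 0 < d₁ j) →
      ∀ α : ℝ, α ∈ Set.Icc (0:ℝ) 1 →
      μ {w | ∃ y ∈ B, w = (fun j => (α • d₁ + (1 - α) • d₀) j * y j) -
            S.mulVec (α • x₁ + (1 - α) • x₀)} ≥
        μ {w | ∃ y ∈ B, w = (fun j => d₁ j * y j) - S.mulVec x₁} ^ α *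
          μ {w | ∃ y ∈ B, w = (fun j => d₀ j * y j) - S.mulVec x₀} ^ (1 - α) := by
  intro x₀ x₁ d₀ d₁ hd₀ hd₁ α hα
  obtain ⟨hα0, hα1⟩ := hα
  set A₁ : Set (Fin n → ℝ) :=
    {w | ∃ y ∈ B, w = (fun j => d₁ j * y j) - S.mulVec x₁} with hA₁
  set A₀ : Set (Fin n → ℝ) :=
    {w | ∃ y ∈ B, w = (fun j => d₀ j * y j) - S.mulVec x₀} with hA₀
  -- positivity of the combined diagonal
  have hden : ∀ j, 0 < α * d₁ j + (1 - α) * d₀ j := by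
    intro j
    rcases eq_or_lt_of_le hα0 with h | h
    · have : α = 0 := h.symm
      simp only [this]
      nlinarith [hd₀ j]
    · have h1 : 0 < α * d₁ j := mul_pos h (hd₁ j)
      have h2 : 0 ≤ (1 - α) * d₀ j := mul_nonneg (by linarith) (hd₀ j).le
      linarith
  -- the key inclusion
  have hsub : α • A₁ + (1 - α) • A₀ ⊆
      {w | ∃ y ∈ B, w = (fun j => (α • d₁ + (1 - α) • d₀) j * y j) -
            S.mulVec (α • x₁ + (1 - α) • x₀)} := by
    rintro w ⟨u, ⟨w₁, ⟨y₁, hy₁, rfl⟩, rfl⟩, v, ⟨w₀, ⟨y₀, hy₀, rfl⟩, rfl⟩, rfl⟩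
    refine ⟨fun j => (α * d₁ j * y₁ j + (1 - α) * d₀ j * y₀ j) /
        (α * d₁ j + (1 - α) * d₀ j), ?_, ?_⟩
    · subst hB
      intro j
      have hdpos := hden j
      have hne : α * d₁ j + (1 - α) * d₀ j ≠ 0 := ne_of_gt hdpos
      have hl0 : 0 ≤ α * d₁ j / (α * d₁ j + (1 - α) * d₀ j) :=
        div_nonneg (mul_nonneg hα0 (hd₁ j).le) hdpos.le
      have hl1 : α * d₁ j / (α * d₁ j + (1 - α) * d₀ j) ≤ 1 := by
        rw [div_le_one hdpos]
        nlinarith [hd₀ j]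
      have h := combo_mem_Icc_EReal (lam := α * d₁ j / (α * d₁ j + (1 - α) * d₀ j))
        hl0 hl1 (hy₁ j) (hy₀ j)
      have key : α * d₁ j / (α * d₁ j + (1 - α) * d₀ j) * y₁ j +
          (1 - α * d₁ j / (α * d₁ j + (1 - α) * d₀ j)) * y₀ j =
          (α * d₁ j * y₁ j + (1 - α) * d₀ j * y₀ j) /
            (α * d₁ j + (1 - α) * d₀ j) := by
        field_simp
        ring
      rw [key] at h
      simpa using h
    · funext j
      have hdpos := hden j
      have hmv : S.mulVec (α • x₁ + (1 - α) • x₀) j =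
          α * S.mulVec x₁ j + (1 - α) * S.mulVec x₀ j := by
        rw [Matrix.mulVec_add, Matrix.mulVec_smul, Matrix.mulVec_smul]
        simp [smul_eq_mul]
      simp only [Pi.add_apply, Pi.smul_apply, Pi.sub_apply, smul_eq_mul, hmv]
      have key : (α * d₁ j + (1 - α) * d₀ j) *
          ((α * d₁ j * y₁ j + (1 - α) * d₀ j * y₀ j) /
            (α * d₁ j + (1 - α) * d₀ j)) =
          α * d₁ j * y₁ j + (1 - α) * d₀ j * y₀ j := by
        field_simp
      rw [key]
      ring
  calc μ {w | ∃ y ∈ B, w = (fun j => (α • d₁ + (1 - α) • d₀) j * y j) -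
            S.mulVec (α • x₁ + (1 - α) • x₀)}
      ≥ μ (α • A₁ + (1 - α) • A₀) := measure_mono hsub
    _ ≥ μ A₁ ^ α * μ A₀ ^ (1 - α) :=
        hPrekopa A₀ A₁ (convexA hB S x₀ d₀) (convexA hB S x₁ d₁) α ⟨hα0, hα1⟩
end
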